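/- Let H and Y be nonempty finite types and π : H × Y → ℝ a joint probability mass function whose H-marginal p_H(h) = ∑_y π(h, y) is positive for every h. Define the Bayes error P_e = 1 − ∑_h max_y π(h, y) and the conditional entropy H(Y | H) = −∑_{(h,y) : π(h,y) > 0} π(h, y) * log (π(h, y) / p_H(h)). If 0 ≤ P_e ≤ 1 − 1 / |Y|, then −log (1 − P_e) ≤ H(Y | H). -/

import Mathlib

/-- Fano-type inequality: for a joint probability mass function `μ` on `H × Y` with
positive `H`-marginal, Bayes error `Pe = 1 - ∑ h, max_y μ (h, y)` satisfying
`0 ≤ Pe ≤ 1 - 1 / |Y|`, we have `-log (1 - Pe) ≤ H(Y | H)`, where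
`H(Y | H) = -∑_{(h,y) : μ(h,y) > 0} μ (h, y) * log (μ (h, y) / ∑ y', μ (h, y'))`. -/
theorem bayes_error_le_conditional_entropy (H Y : Type*)
    [Fintype H] [Nonempty H] [Fintype Y] [Nonempty Y]
    (μ : H × Y → ℝ) (hμ0 : ∀ p, 0 ≤ μ p) (hμ1 : ∑ p, μ p = 1)
    (hmarg : ∀ h, 0 < ∑ y, μ (h, y))
    (Pe : ℝ)
    (hPe : Pe = 1 - ∑ h, Finset.univ.sup' Finset.univ_nonempty (fun y => μ (h, y)))
    (hPe0 : 0 ≤ Pe) (hPe1 : Pe ≤ 1 - 1 / (Fintype.card Y : ℝ)) :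
    -Real.log (1 - Pe)
      ≤ -∑ p ∈ Finset.univ.filter (fun p : H × Y => 0 < μ p),
          μ p * Real.log (μ p / ∑ y, μ (p.1, y)) := by
  set pH : H → ℝ := fun h => ∑ y, μ (h, y) with hpH
  set m : H → ℝ := fun h => Finset.univ.sup' Finset.univ_nonempty (fun y => μ (h, y)) with hm
  have hm_pos : ∀ h, 0 < m h := by
    intro h
    obtain ⟨y, hy⟩ : ∃ y, 0 < μ (h, y) := by
      by_contra hc
      push_neg at hc
      have : pH h ≤ 0 := Finset.sum_nonpos fun y _ => hc y
      exact absurd (hmarg h) (not_lt.mpr this)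
    exact lt_of_lt_of_le hy (Finset.le_sup' (fun y => μ (h, y)) (Finset.mem_univ y))
  have hμle : ∀ h y, μ (h, y) ≤ m h := fun h y => Finset.le_sup' (fun y => μ (h, y)) (Finset.mem_univ y)
  have hsum_pH : ∑ h, pH h = 1 := by
    rw [← hμ1, Fintype.sum_prod_type]
  -- Step 1: filtered sum bound
  have step1 : -(∑ h, pH h * Real.log (m h / pH h))
      ≤ -∑ p ∈ Finset.univ.filter (fun p : H × Y => 0 < μ p),
          μ p * Real.log (μ p / ∑ y, μ (p.1, y)) := by
    rw [neg_le_neg_iff]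
    have hfil : ∑ p ∈ Finset.univ.filter (fun p : H × Y => 0 < μ p),
          μ p * Real.log (μ p / ∑ y, μ (p.1, y))
        = ∑ p : H × Y, μ p * Real.log (μ p / pH p.1) := by
      rw [Finset.sum_filter]
      refine Finset.sum_congr rfl fun p _ => ?_
      by_cases hp : 0 < μ p
      · simp [hp]; exact Or.inl rfl
      · have : μ p = 0 := le_antisymm (not_lt.mp hp) (hμ0 p)
        simp [this]
    rw [hfil, Fintype.sum_prod_type]
    refine Finset.sum_le_sum fun h _ => ?_
    rw [hpH]
    simp only
    rw [Finset.sum_mul]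
    refine Finset.sum_le_sum fun y _ => ?_
    by_cases hp : 0 < μ (h, y)
    · refine mul_le_mul_of_nonneg_left ?_ (hμ0 _)
      exact Real.log_le_log (div_pos hp (hmarg h))
        (by gcongr; exacts [(hmarg h).le, hμle h y])
    · have : μ (h, y) = 0 := le_antisymm (not_lt.mp hp) (hμ0 _)
      simp [this]
  -- Step 2: Jensen
  have h1Pe : 1 - Pe = ∑ h, m h := by rw [hPe]; ring
  have step2 : Real.log (1 - Pe) ≥ ∑ h, pH h * Real.log (m h / pH h) := by
    have := strictConcaveOn_log_Ioi.concaveOn.le_map_sum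
      (t := Finset.univ) (w := pH) (p := fun h => m h / pH h)
      (fun h _ => (hmarg h).le) hsum_pH
      (fun h _ => Set.mem_Ioi.mpr (div_pos (hm_pos h) (hmarg h)))
    have hsum : ∑ h, pH h • (m h / pH h) = ∑ h, m h := by
      refine Finset.sum_congr rfl fun h _ => ?_
      rw [smul_eq_mul, mul_div_assoc', mul_div_cancel_left₀ _ (hmarg h).ne']
    rw [hsum] at this
    simpa [smul_eq_mul, h1Pe] using this
  linarith
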